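/- The function y(x) = sin(x)/x is strictly monotone (strictly decreasing) on the half-open interval (0, π], and its image on this interval is the half-open interval [0, 1). -/
import Mathlib

open Real Set Filter

lemma mul_cos_lt_sin {x : ℝ} (hx : 0 < x) (hx' : x < π) : x * Real.cos x < Real.sin x := by
  rcases lt_or_ge x (π/2) with h | h
  · have hc : 0 < Real.cos x := Real.cos_pos_of_mem_Ioo ⟨by linarith [Real.pi_pos], h⟩
    have := Real.lt_tan hx h
    rw [Real.tan_eq_sin_div_cos, lt_div_iff₀ hc] at this
    linarith
  · have hc : Real.cos x ≤ 0 := Real.cos_nonpos_of_pi_div_two_le_of_le h (by linarith [Real.pi_pos])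
    have hs : 0 < Real.sin x := Real.sin_pos_of_pos_of_lt_pi hx hx'
    nlinarith

lemma sin_div_continuousOn : ContinuousOn (fun x : ℝ => Real.sin x / x) (Set.Ioc 0 π) :=
  Real.continuous_sin.continuousOn.div continuousOn_id (fun x hx => ne_of_gt hx.1)

lemma sin_div_strictAntiOn : StrictAntiOn (fun x : ℝ => Real.sin x / x) (Set.Ioc 0 π) := by
  have hderiv : ∀ x ∈ interior (Set.Ioc (0:ℝ) π),
      deriv (fun x : ℝ => Real.sin x / x) x < 0 := by
    intro x hx
    rw [interior_Ioc] at hx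
    have hx0 : x ≠ 0 := ne_of_gt hx.1
    have hd : HasDerivAt (fun x : ℝ => Real.sin x / x)
        ((Real.cos x * x - Real.sin x * 1) / x ^ 2) x :=
      (Real.hasDerivAt_sin x).div (hasDerivAt_id x) hx0
    rw [hd.deriv]
    apply div_neg_of_neg_of_pos
    · have := mul_cos_lt_sin hx.1 hx.2
      nlinarith
    · positivity
  exact strictAntiOn_of_deriv_neg (convex_Ioc 0 π) sin_div_continuousOn hderiv

theorem sin_div_self_strictAntiOn_and_image :
    StrictAntiOn (fun x : ℝ => Real.sin x / x) (Set.Ioc 0 π) ∧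
    (fun x : ℝ => Real.sin x / x) '' Set.Ioc 0 π = Set.Ico 0 1 := by
  refine ⟨sin_div_strictAntiOn, ?_⟩
  ext y
  simp only [Set.mem_image, Set.mem_Ico]
  constructor
  · rintro ⟨x, ⟨hx0, hxπ⟩, rfl⟩
    refine ⟨?_, ?_⟩
    · rcases eq_or_lt_of_le hxπ with h | h
      · simp [h]
      · exact le_of_lt (div_pos (Real.sin_pos_of_pos_of_lt_pi hx0 h) hx0)
    · rw [div_lt_one hx0]; exact Real.sin_lt hx0
  · rintro ⟨hy0, hy1⟩
    have h1 : ∀ᶠ ε in nhdsWithin (0:ℝ) (Set.Ioi 0), y < Real.cos ε := by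
      apply eventually_nhdsWithin_of_eventually_nhds
      have : ContinuousAt Real.cos 0 := Real.continuous_cos.continuousAt
      apply this.eventually
      simp only [Real.cos_zero]
      exact eventually_gt_nhds hy1
    have h2 : ∀ᶠ ε in nhdsWithin (0:ℝ) (Set.Ioi 0), ε < π / 2 :=
      eventually_nhdsWithin_of_eventually_nhds
        (eventually_lt_nhds (by positivity : (0:ℝ) < π / 2))
    have h3 : ∀ᶠ ε in nhdsWithin (0:ℝ) (Set.Ioi 0), (0:ℝ) < ε :=
      eventually_mem_nhdsWithin
    obtain ⟨ε, hyc, hεπ2, hε0⟩ := (h1.and (h2.and h3)).exists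
    have hεπ : ε < π := lt_trans hεπ2 (by linarith [Real.pi_pos])
    have hfε : y < Real.sin ε / ε := by
      have := mul_cos_lt_sin hε0 hεπ
      have h := (lt_div_iff₀ hε0).mpr (by nlinarith : y * ε < Real.sin ε)
      linarith [h]
    have hivt := intermediate_value_Icc' (le_of_lt hεπ)
      (sin_div_continuousOn.mono (fun x hx => ⟨lt_of_lt_of_le hε0 hx.1, hx.2⟩))
    have hπ0 : Real.sin π / π = 0 := by simp [Real.sin_pi]
    have hy_mem : y ∈ Set.Icc (Real.sin π / π) (Real.sin ε / ε) := by
      rw [hπ0]; exact ⟨hy0, le_of_lt hfε⟩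
    obtain ⟨x, hx, hfx⟩ := hivt hy_mem
    exact ⟨x, ⟨lt_of_lt_of_le hε0 hx.1, hx.2⟩, hfx⟩
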